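/- Let A be a unital C*-algebra, p : ℝ → A a continuously differentiable path of orthogonal projections (p(t)* = p(t), p(t)² = p(t) for all t), and v : ℝ → A a differentiable solution of the monodromy equation v'(t) = [p'(t), p(t)]·v(t) with v(0) = p(0). Then v(t)* · v(t) = p(0) for all t ∈ ℝ. In particular v(t) is a partial isometry: v(t) v(t)* v(t) = v(t). -/

import Mathlib

open Set Real

/-- **The monodromy of a path of projections is a partial isometry (initial projection).**
Let `A` be a unital C*-algebra, `p : ℝ → A` a continuously differentiable path of
orthogonal projections (`p(t)* = p(t)`, `p(t)² = p(t)`), and `v : ℝ → A` a differentiable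
solution of the monodromy equation `v'(t) = [p'(t), p(t)]·v(t)` with `v(0) = p(0)`.
Then `v(t)*·v(t) = p(0)` for all `t`; in particular `v(t) v(t)* v(t) = v(t)`. -/
theorem monodromy_star_mul_self
    {A : Type*} [CStarAlgebra A]
    (p : ℝ → A) (hp : ContDiff ℝ 1 p)
    (hsa : ∀ t : ℝ, star (p t) = p t) (hidem : ∀ t : ℝ, p t * p t = p t)
    (v : ℝ → A)
    (hv : ∀ t : ℝ, HasDerivAt v ((deriv p t * p t - p t * deriv p t) * v t) t)
    (hv0 : v 0 = p 0) :
    ∀ t : ℝ, star (v t) * v t = p 0 ∧ v t * star (v t) * v t = v t := by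
  set G : ℝ → A := fun t => deriv p t * p t - p t * deriv p t with hGdef
  have hpd : Differentiable ℝ p := hp.differentiable one_ne_zero
  -- the derivative of p is self-adjoint
  have hdsa : ∀ t, star (deriv p t) = deriv p t := by
    intro t
    have h1 : HasDerivAt (fun s => star (p s)) (star (deriv p t)) t :=
      ((hpd t).hasDerivAt).star
    have h2 : (fun s => star (p s)) = p := funext hsa
    rw [h2] at h1
    exact h1.deriv.symm
  -- the generator is skew-adjoint
  have hGskew : ∀ t, star (G t) = -(G t) := by
    intro t
    simp only [hGdef, star_sub, star_mul, hsa, hdsa]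
    abel
  -- Part 1 : star (v t) * v t is constant
  have key : ∀ t, star (v t) * v t = p 0 := by
    have hf : ∀ t, HasDerivAt (fun s => star (v s) * v s) 0 t := by
      intro t
      have h1 : HasDerivAt (fun s => star (v s)) (star (G t * v t)) t := (hv t).star
      have h2 : HasDerivAt (fun s => star (v s) * v s) _ t := h1.mul (hv t)
      convert h2 using 1
      have : star (G t * v t) = star (v t) * (-(G t)) := by
        rw [star_mul, hGskew]
      rw [this]
      simp [mul_assoc]
      simp [hGdef]
    have hconst : ∀ t, star (v t) * v t = star (v 0) * v 0 := fun t =>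
      is_const_of_deriv_eq_zero (fun s => (hf s).differentiableAt)
        (fun s => (hf s).deriv) t 0
    intro t
    rw [hconst t, hv0, hsa 0, hidem 0]
  -- Part 2 : v t * p 0 = v t, by uniqueness of solutions of the linear ODE
  have key2 : ∀ t, v t * p 0 = v t := by
    intro t
    set T : ℝ := |t| + 1 with hT
    have hT0 : (0:ℝ) < T := by positivity
    -- continuity and bound for G on the compact interval
    have hGcont : Continuous G := by
      have := (hp.continuous_deriv le_rfl)
      fun_prop
    obtain ⟨C, hC⟩ := (isCompact_Icc (a := -T) (b := T)).exists_bound_of_continuousOn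
      hGcont.continuousOn
    set K : NNReal := C.toNNReal with hK
    -- clamped vector field
    set W : ℝ → A → A := fun s x => G (max (-T) (min T s)) * x with hW
    have hclamp : ∀ s, max (-T) (min T s) ∈ Icc (-T) T := by
      intro s
      constructor
      · exact le_max_left _ _
      · exact max_le (by linarith) (min_le_left _ _)
    have hlip : ∀ s, LipschitzWith K (W s) := by
      intro s
      apply LipschitzWith.of_dist_le_mul
      intro x y
      have h1 : dist (W s x) (W s y) = ‖G (max (-T) (min T s)) * (x - y)‖ := by
        rw [dist_eq_norm, ← mul_sub]
      rw [h1, dist_eq_norm]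
      calc ‖G (max (-T) (min T s)) * (x - y)‖
          ≤ ‖G (max (-T) (min T s))‖ * ‖x - y‖ := norm_mul_le _ _
        _ ≤ (K : ℝ) * ‖x - y‖ := by
            apply mul_le_mul_of_nonneg_right _ (norm_nonneg _)
            refine le_trans (hC _ (hclamp s)) ?_
            simp [hK, Real.coe_toNNReal', le_max_left]
    have hWeq : ∀ s ∈ Ioo (-T) T, W s = fun x => G s * x := by
      intro s hs
      have : max (-T) (min T s) = s := by
        rw [min_eq_right hs.2.le, max_eq_right hs.1.le]
      simp [hW, this]
    have h0mem : (0:ℝ) ∈ Ioo (-T) T := ⟨by linarith, hT0⟩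
    have htmem : t ∈ Ioo (-T) T := by
      constructor
      · have := neg_abs_le t; linarith
      · have := le_abs_self t; linarith
    have huniq := ODE_solution_unique_of_mem_Ioo (v := W) (K := K)
      (s := fun _ => (univ : Set A)) (f := v) (g := fun s => v s * p 0)
      (t₀ := 0) (a := -T) (b := T)
      (fun s _ => (hlip s).lipschitzOnWith) h0mem
      (fun s hs => by
        refine ⟨?_, trivial⟩
        rw [hWeq s hs]
        exact hv s)
      (fun s hs => by
        refine ⟨?_, trivial⟩
        rw [hWeq s hs]
        have := (hv s).mul_const (p 0)
        convert this using 1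
        · rfl
        simp [mul_assoc]
        rfl)
      (by simp [hv0, hidem 0])
    exact (huniq htmem).symm
  intro t
  refine ⟨key t, ?_⟩
  rw [mul_assoc, key t, key2 t]
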